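/- Let d ≥ 1 and 1 ≤ k ≤ n. The partial trace over the last n−k tensor factors of the maximally mixed state on the symmetric subspace of (ℂ^d)^{⊗n} equals the maximally mixed state on the symmetric subspace of (ℂ^d)^{⊗k}: tr_{n−k}[π_sym^{d,n}] = π_sym^{d,k}. -/

import Mathlib

open scoped BigOperators Matrix Kronecker ComplexOrder
open Matrix

noncomputable section

variable {ι : Type*} [Fintype ι] [DecidableEq ι]

/-- Apply a real-scalar function to a Hermitian matrix via the spectral decomposition
(junk value `0` on non-Hermitian matrices). -/
def hermFun (f : ℝ → ℂ) (A : Matrix ι ι ℂ) : Matrix ι ι ℂ :=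
  if hA : A.IsHermitian then
    (hA.eigenvectorUnitary : Matrix ι ι ℂ) * Matrix.diagonal (fun i => f (hA.eigenvalues i)) *
      (star (hA.eigenvectorUnitary : Matrix ι ι ℂ))
  else 0

/-- Matrix logarithm (on the support; natural logarithm). -/
def matLog (A : Matrix ι ι ℂ) : Matrix ι ι ℂ := hermFun (fun x => (Real.log x : ℂ)) A

/-- Matrix square root of a Hermitian (e.g. positive semidefinite) matrix. -/
def matSqrt (A : Matrix ι ι ℂ) : Matrix ι ι ℂ := hermFun (fun x => (Real.sqrt x : ℂ)) A

/-- Complex matrix power with the Moore–Penrose convention (inverse powers taken on the support). -/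
def matCPow (A : Matrix ι ι ℂ) (z : ℂ) : Matrix ι ι ℂ :=
  hermFun (fun x => if x = 0 then 0 else (x : ℂ) ^ z) A

/-- A state (density operator). -/
def IsState (ρ : Matrix ι ι ℂ) : Prop := ρ.PosSemidef ∧ ρ.trace = 1

/-- Quantum relative entropy `D(ρ‖σ) = tr[ρ (log ρ - log σ)]`. -/
def relEnt (ρ σ : Matrix ι ι ℂ) : ℝ := ((ρ * (matLog ρ - matLog σ)).trace).re

/-- von Neumann entropy `H(ρ) = -tr[ρ log ρ]`. -/
def vnEntropy (ρ : Matrix ι ι ℂ) : ℝ := -((ρ * matLog ρ).trace).re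

/-- Trace norm `‖X‖₁ = tr √(X† X)`. -/
def traceNorm (X : Matrix ι ι ℂ) : ℝ := ((matSqrt (Xᴴ * X)).trace).re

/-- Fidelity `F(ρ,σ) = ‖√ρ √σ‖₁²`. -/
def fidelity (ρ σ : Matrix ι ι ℂ) : ℝ := (traceNorm (matSqrt ρ * matSqrt σ)) ^ 2

variable {A B : Type*} [Fintype A] [DecidableEq A] [Fintype B] [DecidableEq B]

/-- The extension `Λ ⊗ id_m` of a map on matrices. -/
def extendChan (Λ : Matrix A A ℂ →ₗ[ℂ] Matrix B B ℂ) {m : Type*} [Fintype m]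
    (M : Matrix (A × m) (A × m) ℂ) : Matrix (B × m) (B × m) ℂ :=
  fun p q => Λ (fun a a' => M (a, p.2) (a', q.2)) p.1 q.1

/-- A quantum channel: a completely positive trace-preserving linear map. -/
structure IsQChannel (Λ : Matrix A A ℂ →ₗ[ℂ] Matrix B B ℂ) : Prop where
  tp : ∀ M, (Λ M).trace = M.trace
  cp : ∀ (m : ℕ) (M : Matrix (A × Fin m) (A × Fin m) ℂ), M.PosSemidef →
    (extendChan Λ M).PosSemidef

/-- The marginal of a state of `n` systems on the `j`-th system. -/
def marginal {n : ℕ} (ρ : Matrix (Fin n → ι) (Fin n → ι) ℂ) (j : Fin n) :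
    Matrix ι ι ℂ :=
  fun a b => ∑ f : {i : Fin n // i ≠ j} → ι,
      ρ (fun i => if h : i = j then a else f ⟨i, h⟩)
        (fun i => if h : i = j then b else f ⟨i, h⟩)

/-- `n`-fold tensor power of a matrix. -/
def tpow (σ : Matrix ι ι ℂ) (n : ℕ) : Matrix (Fin n → ι) (Fin n → ι) ℂ :=
  fun f g => ∏ i, σ (f i) (g i)

/-- Partial trace over the last `n - k` tensor factors. -/
def ptraceLast {n k : ℕ} (h : k ≤ n) (ρ : Matrix (Fin n → ι) (Fin n → ι) ℂ) :
    Matrix (Fin k → ι) (Fin k → ι) ℂ :=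
  fun a b => ∑ z : Fin (n - k) → ι,
    ρ (fun i => if h' : (i : ℕ) < k then a ⟨i, h'⟩ else z ⟨(i : ℕ) - k, by have := i.isLt; omega⟩)
      (fun i => if h' : (i : ℕ) < k then b ⟨i, h'⟩ else z ⟨(i : ℕ) - k, by have := i.isLt; omega⟩)

/-- Permutation matrix acting on `(ℂ^d)^{⊗ n}`. -/
def permMat (d n : ℕ) (π : Equiv.Perm (Fin n)) :
    Matrix (Fin n → Fin d) (Fin n → Fin d) ℂ :=
  fun f g => if g = f ∘ π then 1 else 0

/-- Orthogonal projection onto the symmetric subspace of `(ℂ^d)^{⊗ n}`. -/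
def symProj (d n : ℕ) : Matrix (Fin n → Fin d) (Fin n → Fin d) ℂ :=
  ((n.factorial : ℂ))⁻¹ • ∑ π : Equiv.Perm (Fin n), permMat d n π

/-- Dimension `d[n] = C(d+n-1, n)` of the symmetric subspace. -/
def dsym (d n : ℕ) : ℕ := (d + n - 1).choose n

/-- Maximally mixed state on the symmetric subspace. -/
def piSym (d n : ℕ) : Matrix (Fin n → Fin d) (Fin n → Fin d) ℂ :=
  ((dsym d n : ℂ))⁻¹ • symProj d n

/-- Tensoring a matrix on the first `k` factors with the identity on the last `n-k` factors. -/
def extendId {d k n : ℕ} (h : k ≤ n) (M : Matrix (Fin k → Fin d) (Fin k → Fin d) ℂ) :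
    Matrix (Fin n → Fin d) (Fin n → Fin d) ℂ :=
  fun f g => (if ∀ i : Fin n, k ≤ (i : ℕ) → f i = g i then 1 else 0) *
    M (fun i => f (Fin.castLE h i)) (fun i => g (Fin.castLE h i))

/-- The universal quantum cloning machine `C_{k→n}`. -/
def uqcm (d : ℕ) {k n : ℕ} (h : k ≤ n) (ω : Matrix (Fin k → Fin d) (Fin k → Fin d) ℂ) :
    Matrix (Fin n → Fin d) (Fin n → Fin d) ℂ :=
  (((dsym d k : ℂ)) / ((dsym d n : ℂ))) •
    (symProj d n * extendId h (symProj d k * ω * symProj d k) * symProj d n)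

/-- The symmetrized partial trace channel `P_{n→k}`. -/
def symPTrace (d : ℕ) {k n : ℕ} (h : k ≤ n) (ω : Matrix (Fin n → Fin d) (Fin n → Fin d) ℂ) :
    Matrix (Fin k → Fin d) (Fin k → Fin d) ℂ :=
  symProj d k * ptraceLast h (symProj d n * ω * symProj d n) * symProj d k

/-- Orthogonal projection onto the antisymmetric subspace of `(ℂ^d)^{⊗ n}`. -/
def antiProj (d n : ℕ) : Matrix (Fin n → Fin d) (Fin n → Fin d) ℂ :=
  ((n.factorial : ℂ))⁻¹ • ∑ π : Equiv.Perm (Fin n), ((Equiv.Perm.sign π : ℤ) : ℂ) • permMat d n π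

/-- Maximally mixed state on the antisymmetric subspace. -/
def piAnti (d n : ℕ) : Matrix (Fin n → Fin d) (Fin n → Fin d) ℂ :=
  ((d.choose n : ℂ))⁻¹ • antiProj d n

/-- The antisymmetric cloning machine. -/
def antiClone (d : ℕ) {k n : ℕ} (h : k ≤ n) (ω : Matrix (Fin k → Fin d) (Fin k → Fin d) ℂ) :
    Matrix (Fin n → Fin d) (Fin n → Fin d) ℂ :=
  (((d.choose k : ℂ)) / ((d.choose n : ℂ))) •
    (antiProj d n * extendId h (antiProj d k * ω * antiProj d k) * antiProj d n)

/-- The antisymmetrized partial trace. -/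
def antiPTrace (d : ℕ) {k n : ℕ} (h : k ≤ n) (ω : Matrix (Fin n → Fin d) (Fin n → Fin d) ℂ) :
    Matrix (Fin k → Fin d) (Fin k → Fin d) ℂ :=
  antiProj d k * ptraceLast h (antiProj d n * ω * antiProj d n) * antiProj d k

/-- Rank-one projection (outer product) `|v⟩⟨v|`. -/
def outer {α : Type*} (v : α → ℂ) : Matrix α α ℂ :=
  fun x y => v x * (starRingEnd ℂ) (v y)

/-- Slater determinant vector `φ₁ ∧ ⋯ ∧ φ_k`. -/
def slater {d k : ℕ} (w : Fin k → (Fin d → ℂ)) : (Fin k → Fin d) → ℂ :=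
  fun f => ((Real.sqrt k.factorial : ℂ))⁻¹ *
    ∑ π : Equiv.Perm (Fin k), ((Equiv.Perm.sign π : ℤ) : ℂ) * ∏ i, w (π i) (f i)

/-- Partial trace over the second tensor factor. -/
def trB {ιA ιB : Type*} [Fintype ιB] (ρ : Matrix (ιA × ιB) (ιA × ιB) ℂ) : Matrix ιA ιA ℂ :=
  fun a a' => ∑ b, ρ (a, b) (a', b)

/-- Partial trace over the first tensor factor. -/
def trA {ιA ιB : Type*} [Fintype ιA] (ρ : Matrix (ιA × ιB) (ιA × ιB) ℂ) : Matrix ιB ιB ℂ :=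
  fun b b' => ∑ a, ρ (a, b) (a, b')

/-- The probability density `β(t) = (π/2)(1 + cosh(π t))⁻¹`. -/
def betaDens (t : ℝ) : ℝ := (Real.pi / 2) * (1 + Real.cosh (Real.pi * t))⁻¹

/-- Rotated Petz recovery map `R^t_{A,X}`, mapping operators on `B` to operators on `A ⊗ B`. -/
def petzA {ιA ιB : Type*} [Fintype ιA] [DecidableEq ιA] [Fintype ιB] [DecidableEq ιB]
    (t : ℝ) (X : Matrix (ιA × ιB) (ιA × ιB) ℂ) (Y : Matrix ιB ιB ℂ) :
    Matrix (ιA × ιB) (ιA × ιB) ℂ :=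
  matCPow X ((1 + t * Complex.I) / 2) *
    ((1 : Matrix ιA ιA ℂ) ⊗ₖ
      (matCPow (trA X) (-(1 + t * Complex.I) / 2) * Y * matCPow (trA X) (-(1 - t * Complex.I) / 2))) *
    matCPow X ((1 - t * Complex.I) / 2)

/-- Rotated Petz recovery map `R^t_{B,X}`, mapping operators on `A` to operators on `A ⊗ B`. -/
def petzB {ιA ιB : Type*} [Fintype ιA] [DecidableEq ιA] [Fintype ιB] [DecidableEq ιB]
    (t : ℝ) (X : Matrix (ιA × ιB) (ιA × ιB) ℂ) (Y : Matrix ιA ιA ℂ) :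
    Matrix (ιA × ιB) (ιA × ιB) ℂ :=
  matCPow X ((1 + t * Complex.I) / 2) *
    ((matCPow (trB X) (-(1 + t * Complex.I) / 2) * Y * matCPow (trB X) (-(1 - t * Complex.I) / 2)) ⊗ₖ
      (1 : Matrix ιB ιB ℂ)) *
    matCPow X ((1 - t * Complex.I) / 2)

/-- Cloning map between two general subspaces, given by their orthogonal projections. -/
def genClone {d k n : ℕ} (h : k ≤ n) (dX dY : ℕ)
    (PX : Matrix (Fin n → Fin d) (Fin n → Fin d) ℂ)
    (PY : Matrix (Fin k → Fin d) (Fin k → Fin d) ℂ)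
    (ω : Matrix (Fin k → Fin d) (Fin k → Fin d) ℂ) :
    Matrix (Fin n → Fin d) (Fin n → Fin d) ℂ :=
  (((dY : ℂ)) / ((dX : ℂ))) • (PX * extendId h (PY * ω * PY) * PX)

/-- Partial trace channel between two general subspaces. -/
def genPTrace {d k n : ℕ} (h : k ≤ n)
    (PX : Matrix (Fin n → Fin d) (Fin n → Fin d) ℂ)
    (PY : Matrix (Fin k → Fin d) (Fin k → Fin d) ℂ)
    (ω : Matrix (Fin n → Fin d) (Fin n → Fin d) ℂ) :
    Matrix (Fin k → Fin d) (Fin k → Fin d) ℂ :=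
  PY * ptraceLast h (PX * ω * PX) * PY


section Helpers

open Finset

private lemma symProj_comp_perm (d m : ℕ) (τ : Equiv.Perm (Fin m)) (f g : Fin m → Fin d) :
    symProj d m (f ∘ τ) (g ∘ τ) = symProj d m f g := by
  unfold symProj permMat
  simp only [Matrix.smul_apply, Matrix.sum_apply, smul_eq_mul]
  erw [Matrix.sum_apply, Matrix.sum_apply]
  congr 1
  refine Fintype.sum_bijective (fun π => τ * π * τ⁻¹)
    ((Equiv.mulLeft τ).trans (Equiv.mulRight τ⁻¹)).bijective _ _ ?_
  intro π
  refine if_congr ?_ rfl rfl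
  constructor
  · intro h
    funext x
    have := congrFun h (τ⁻¹ x)
    simpa [Equiv.Perm.mul_apply] using this
  · intro h
    funext x
    have := congrFun h (τ x)
    simpa [Equiv.Perm.mul_apply] using this

private lemma key_sum (d n : ℕ) (a b : Fin n → Fin d) :
    ∑ c : Fin d, ∑ π : Equiv.Perm (Fin (n+1)),
      (if Fin.cons c b = Fin.cons c a ∘ ⇑π then (1:ℂ) else 0)
    = ((d : ℂ) + n) * ∑ σ : Equiv.Perm (Fin n), (if b = a ∘ ⇑σ then (1:ℂ) else 0) := by
  have hcond : ∀ (c : Fin d) (p : Fin (n+1)) (σ : Equiv.Perm (Fin n)),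
      (Fin.cons c b = Fin.cons c a ∘ ⇑(Equiv.Perm.decomposeFin.symm (p, σ)))
        ↔ ((Fin.cons (α := fun _ => Fin d) c a p) = c ∧ b = a ∘ ⇑σ) := by
    intro c p σ
    rw [funext_iff, Fin.forall_fin_succ]
    simp only [Function.comp_apply, Equiv.Perm.decomposeFin_symm_apply_zero,
      Equiv.Perm.decomposeFin_symm_apply_succ, Fin.cons_zero, Fin.cons_succ]
    rcases Fin.eq_zero_or_eq_succ p with hp | ⟨q, hp⟩
    · subst hp
      simp only [Equiv.swap_self, Equiv.refl_apply, Fin.cons_succ, Fin.cons_zero]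
      rw [funext_iff]
      simp [eq_comm]
    · subst hp
      simp only [Fin.cons_succ]
      have hswap : ∀ (h0 : a q = c) (i : Fin n),
          Fin.cons (α := fun _ => Fin d) c a ((Equiv.swap 0 q.succ) (σ i).succ) = a (σ i) := by
        intro h0 i
        by_cases hq : σ i = q
        · rw [hq, Equiv.swap_apply_right, Fin.cons_zero, ← h0]
        · rw [Equiv.swap_apply_of_ne_of_ne (Fin.succ_ne_zero _)
            (fun hc => hq (Fin.succ_injective n hc)), Fin.cons_succ]
      constructor
      · rintro ⟨h0, h1⟩
        refine ⟨h0.symm, funext fun i => ?_⟩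
        rw [h1 i, hswap h0.symm i]
        rfl
      · rintro ⟨h0, h1⟩
        refine ⟨h0.symm, fun i => ?_⟩
        rw [congrFun h1 i, Function.comp_apply, hswap h0 i]
  have hinner : ∀ c : Fin d,
      (∑ π : Equiv.Perm (Fin (n+1)), (if Fin.cons c b = Fin.cons c a ∘ ⇑π then (1:ℂ) else 0))
      = ∑ p : Fin (n+1), ∑ σ : Equiv.Perm (Fin n),
          (if Fin.cons (α := fun _ => Fin d) c a p = c then (1:ℂ) else 0) * (if b = a ∘ ⇑σ then (1:ℂ) else 0) := by
    intro c
    rw [← Equiv.sum_comp Equiv.Perm.decomposeFin.symm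
      (fun π => if Fin.cons c b = Fin.cons c a ∘ ⇑π then (1:ℂ) else 0), Fintype.sum_prod_type]
    refine Finset.sum_congr rfl fun p _ => Finset.sum_congr rfl fun σ _ => ?_
    rw [if_congr (hcond c p σ) rfl rfl]
    by_cases hP : Fin.cons (α := fun _ => Fin d) c a p = c <;>
      by_cases hQ : b = a ∘ ⇑σ <;> simp [hP, hQ]
  calc ∑ c : Fin d, ∑ π : Equiv.Perm (Fin (n+1)),
        (if Fin.cons c b = Fin.cons c a ∘ ⇑π then (1:ℂ) else 0)
      = ∑ c : Fin d, ∑ p : Fin (n+1), ∑ σ : Equiv.Perm (Fin n),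
          (if Fin.cons (α := fun _ => Fin d) c a p = c then (1:ℂ) else 0) *
            (if b = a ∘ ⇑σ then (1:ℂ) else 0) :=
        Finset.sum_congr rfl fun c _ => hinner c
    _ = (∑ c : Fin d, ∑ p : Fin (n+1),
          (if Fin.cons (α := fun _ => Fin d) c a p = c then (1:ℂ) else 0)) *
          ∑ σ : Equiv.Perm (Fin n), (if b = a ∘ ⇑σ then (1:ℂ) else 0) := by
        rw [Finset.sum_mul]
        refine Finset.sum_congr rfl fun c _ => ?_
        rw [Finset.sum_mul]
        exact Finset.sum_congr rfl fun p _ => (Finset.mul_sum _ _ _).symm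
    _ = ((d : ℂ) + n) * ∑ σ : Equiv.Perm (Fin n), (if b = a ∘ ⇑σ then (1:ℂ) else 0) := by
        congr 1
        have hc : ∀ c : Fin d, (∑ p : Fin (n+1),
            (if Fin.cons (α := fun _ => Fin d) c a p = c then (1:ℂ) else 0))
            = 1 + ∑ q : Fin n, (if a q = c then (1:ℂ) else 0) := by
          intro c
          rw [Fin.sum_univ_succ]
          simp
        rw [Finset.sum_congr rfl fun c _ => hc c, Finset.sum_add_distrib, Finset.sum_const,
          Finset.sum_comm]
        simp [Finset.sum_ite_eq]

private lemma ptrace_self {d k : ℕ} (h : k ≤ k) (ρ : Matrix (Fin k → Fin d) (Fin k → Fin d) ℂ) :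
    ptraceLast h ρ = ρ := by
  ext a b
  unfold ptraceLast
  haveI : IsEmpty (Fin (k - k)) := by rw [Nat.sub_self]; infer_instance
  rw [Fintype.sum_unique]
  congr 1 <;> funext i <;> exact dif_pos i.isLt

private lemma ptrace_step (d n : ℕ) (hd : 1 ≤ d) :
    ptraceLast (Nat.le_succ n) (piSym d (n+1)) = piSym d n := by
  haveI hsub : Subsingleton (Fin (n+1-n)) := by
    have h : n+1-n = 1 := by omega
    rw [h]; infer_instance
  have h0 : 0 < n+1-n := by omega
  have harg : ∀ (v : Fin n → Fin d) (z : Fin (n+1-n) → Fin d),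
      (fun i : Fin (n+1) => if h' : (i:ℕ) < n then v ⟨i, h'⟩
        else z ⟨(i:ℕ) - n, by have := i.isLt; omega⟩)
      = Fin.cons (α := fun _ => Fin d) (z ⟨0, h0⟩) v ∘ ⇑(finRotate (n+1)) := by
    intro v z
    funext i
    simp only [Function.comp_apply, finRotate_succ_apply]
    by_cases h : (i:ℕ) < n
    · rw [dif_pos h]
      have hsucc : i + 1 = Fin.succ ⟨i, h⟩ := by
        apply Fin.ext
        rw [Fin.val_add_one_of_lt (by rw [Fin.lt_def, Fin.val_last]; exact h)]
        rfl
      rw [hsucc, Fin.cons_succ]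
    · rw [dif_neg h]
      have hlast : i = Fin.last n := Fin.ext (by rw [Fin.val_last]; have := i.isLt; omega)
      conv_rhs => rw [hlast, Fin.last_add_one]
      rw [Fin.cons_zero]
      exact congrArg z (Subsingleton.elim _ _)
  have hbij : Function.Bijective (fun z : Fin (n+1-n) → Fin d => z ⟨0, h0⟩) :=
    Function.bijective_iff_has_inverse.mpr ⟨fun c _ => c,
      fun z => funext fun j => congrArg z (Subsingleton.elim _ _),
      fun c => rfl⟩
  ext a b
  unfold ptraceLast
  refine Eq.trans (Finset.sum_congr rfl
    (g := fun z : Fin (n+1-n) → Fin d => piSym d (n+1)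
      (Fin.cons (α := fun _ => Fin d) (z ⟨0, h0⟩) a ∘ ⇑(finRotate (n+1)))
      (Fin.cons (α := fun _ => Fin d) (z ⟨0, h0⟩) b ∘ ⇑(finRotate (n+1))))
    fun z _ => ?_) ?_
  · exact congrArg₂ (piSym d (n+1)) (harg a z) (harg b z)
  rw [Fintype.sum_bijective _ hbij _
    (fun c => piSym d (n+1) (Fin.cons (α := fun _ => Fin d) c a ∘ ⇑(finRotate (n+1)))
      (Fin.cons (α := fun _ => Fin d) c b ∘ ⇑(finRotate (n+1)))) (fun z => rfl)]
  simp only [piSym, Matrix.smul_apply, smul_eq_mul, symProj_comp_perm]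
  simp only [symProj, permMat, Matrix.smul_apply, Matrix.sum_apply, smul_eq_mul]
  simp only [← Finset.mul_sum]
  rw [key_sum d n a b]
  have e1 : (d+n) * (dsym d n * n.factorial) = dsym d (n+1) * (n+1).factorial := by
    have h2 : (d + n) * dsym d n = dsym d (n+1) * (n+1) := by
      unfold dsym
      have h3 : d + n - 1 + 1 = d + n := by omega
      have h4 := Nat.add_one_mul_choose_eq (d+n-1) n
      rw [h3] at h4
      rw [show d + (n+1) - 1 = d + n by omega]
      exact h4
    calc (d+n) * (dsym d n * n.factorial) = ((d+n) * dsym d n) * n.factorial := by ring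
      _ = (dsym d (n+1) * (n+1)) * n.factorial := by rw [h2]
      _ = dsym d (n+1) * (n+1).factorial := by rw [Nat.factorial_succ]; ring
  have hz1 : ((dsym d n : ℂ)) ≠ 0 := by
    have h : 0 < dsym d n := by unfold dsym; exact Nat.choose_pos (by omega)
    exact_mod_cast h.ne'
  have hz2 : ((dsym d (n+1) : ℂ)) ≠ 0 := by
    have h : 0 < dsym d (n+1) := by unfold dsym; exact Nat.choose_pos (by omega)
    exact_mod_cast h.ne'
  have hz3 : ((n.factorial : ℂ)) ≠ 0 := by exact_mod_cast n.factorial_ne_zero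
  have hz4 : (((n+1).factorial : ℂ)) ≠ 0 := by exact_mod_cast (n+1).factorial_ne_zero
  have hfac : ((dsym d (n+1) : ℂ))⁻¹ * (((n+1).factorial : ℂ))⁻¹ * ((d:ℂ)+n)
      = ((dsym d n : ℂ))⁻¹ * ((n.factorial : ℂ))⁻¹ := by
    have e1c : ((d:ℂ)+n) * ((dsym d n : ℂ) * (n.factorial : ℂ))
        = (dsym d (n+1) : ℂ) * ((n+1).factorial : ℂ) := by exact_mod_cast e1
    field_simp
    linear_combination e1c
  linear_combination (∑ σ : Equiv.Perm (Fin n), if b = a ∘ ⇑σ then (1:ℂ) else 0) * hfac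

set_option maxHeartbeats 1000000 in
private def splitE (d k n : ℕ) (h1 : k ≤ n) :
    ((Fin (n-k) → Fin d) × (Fin (n+1-n) → Fin d)) ≃ (Fin (n+1-k) → Fin d) where
  toFun := fun zw j => if h : (j : ℕ) < n - k then zw.1 ⟨j, h⟩
    else zw.2 ⟨(j : ℕ) - (n-k), by have := j.isLt; omega⟩
  invFun := fun z => (fun j => z ⟨j, by have := j.isLt; omega⟩,
    fun j => z ⟨(j:ℕ) + (n-k), by have := j.isLt; omega⟩)
  left_inv := by
    rintro ⟨z1, z2⟩
    refine Prod.ext ?_ ?_ <;> funext j <;> dsimp only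
    · rw [dif_pos j.isLt]
    · rw [dif_neg (by omega)]
      refine congrArg z2 (Fin.ext ?_)
      show (j:ℕ) + (n-k) - (n-k) = (j:ℕ)
      omega
  right_inv := by
    intro z
    funext j
    dsimp only
    by_cases hj : (j:ℕ) < n - k
    · rw [dif_pos hj]
    · rw [dif_neg hj]
      refine congrArg z (Fin.ext ?_)
      show (j:ℕ) - (n-k) + (n-k) = (j:ℕ)
      omega

set_option maxHeartbeats 1000000 in
private lemma ptrace_comp (d k n : ℕ) (h1 : k ≤ n)
    (ρ : Matrix (Fin (n+1) → Fin d) (Fin (n+1) → Fin d) ℂ) :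
    ptraceLast (h1.trans n.le_succ) ρ = ptraceLast h1 (ptraceLast n.le_succ ρ) := by
  ext a b
  unfold ptraceLast
  rw [← Equiv.sum_comp (splitE d k n h1), Fintype.sum_prod_type]
  refine Finset.sum_congr rfl fun z' _ => Finset.sum_congr rfl fun w _ => ?_
  simp only [splitE, Equiv.coe_fn_mk]
  congr 1
  · congr 1
    funext i
    by_cases hik : (i:ℕ) < k
    · have hin : (i:ℕ) < n := lt_of_lt_of_le hik h1
      rw [dif_pos hik, dif_pos hin, dif_pos hik]
    · by_cases hin : (i:ℕ) < n
      · rw [dif_neg hik, dif_pos hin, dif_neg hik, dif_pos (show (i:ℕ) - k < n - k by omega)]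
      · rw [dif_neg hik, dif_neg hin, dif_neg (show ¬((i:ℕ) - k < n - k) by omega)]
        congr 1
        simp only [Fin.mk.injEq]
        omega
  · funext i
    by_cases hik : (i:ℕ) < k
    · have hin : (i:ℕ) < n := lt_of_lt_of_le hik h1
      rw [dif_pos hik, dif_pos hin, dif_pos hik]
    · by_cases hin : (i:ℕ) < n
      · rw [dif_neg hik, dif_pos hin, dif_neg hik, dif_pos (show (i:ℕ) - k < n - k by omega)]
      · rw [dif_neg hik, dif_neg hin, dif_neg (show ¬((i:ℕ) - k < n - k) by omega)]
        congr 1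
        simp only [Fin.mk.injEq]
        omega

end Helpers

end
/-- The partial trace of the maximally mixed state on the symmetric subspace of `n` qudits
is the maximally mixed state on the symmetric subspace of `k` qudits. -/
theorem ptrace_piSym
    (d k n : ℕ) (hd : 1 ≤ d) (hk : 1 ≤ k) (hkn : k ≤ n) :
    ptraceLast hkn (piSym d n) = piSym d k := by
  induction n, hkn using Nat.le_induction with
  | base => exact ptrace_self _ _
  | succ n hkn ih =>
      have h := ptrace_comp d k n hkn (piSym d (n+1))
      rw [ptrace_step d n hd, ih] at h
      exact h
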